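/- For every α > 0, the sum Σ_{j≥2} (α/j)^{j/2} ≤ e^{8α} − 1. -/

import Mathlib

private lemma amgm_sqrt (x y : ℝ) (hx : 0 ≤ x) (hy : 0 ≤ y) :
    Real.sqrt (x * y) ≤ (x + y) / 2 := by
  have h : Real.sqrt (x * y) ≤ Real.sqrt (((x + y) / 2) ^ 2) :=
    Real.sqrt_le_sqrt (by nlinarith [sq_nonneg (x - y)])
  rwa [Real.sqrt_sq (by positivity)] at h

private lemma exp_tsum (x : ℝ) : ∑' n : ℕ, x ^ n / (n.factorial : ℝ) = Real.exp x := by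
  rw [Real.exp_eq_exp_ℝ, NormedSpace.exp_eq_tsum_div]

/-- For every `α > 0`, `Σ_{j ≥ 2} (α/j)^{j/2} ≤ e^{8α} − 1`. -/
theorem sum_pow_half_le (α : ℝ) (hα : 0 < α) :
    ∑' j : ℕ, (if 2 ≤ j then (α / j) ^ ((j : ℝ) / 2) else 0)
      ≤ Real.exp (8 * α) - 1 := by
  set f : ℕ → ℝ := fun j => if 2 ≤ j then (α / j) ^ ((j : ℝ) / 2) else 0 with hf
  have fnn : ∀ j, 0 ≤ f j := by
    intro j
    simp only [hf]
    split
    · exact Real.rpow_nonneg (by positivity) _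
    · exact le_refl 0
  rcases le_or_gt α 1 with h1 | h1
  · -- small α : compare with geometric series α * r^j, r = (1/2)^(1/2)
    set r : ℝ := (1/2 : ℝ) ^ (1/2 : ℝ) with hrdef
    have hr0 : 0 ≤ r := Real.rpow_nonneg (by norm_num) _
    have hr2 : r ^ 2 = 1/2 := by
      rw [hrdef, ← Real.rpow_natCast ((1/2:ℝ) ^ (1/2:ℝ)) 2, ← Real.rpow_mul (by norm_num)]
      norm_num
    have hr78 : r ≤ 7/8 := by nlinarith
    have hr1 : r < 1 := by linarith
    have key : ∀ j, f j ≤ α * r ^ j := by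
      intro j
      simp only [hf]
      split
      · rename_i hj
        have hj2 : (2 : ℝ) ≤ (j : ℝ) := by exact_mod_cast hj
        have hz : (0:ℝ) ≤ (j:ℝ)/2 := by linarith
        have step1 : (α / j) ^ ((j : ℝ)/2) ≤ (α * (1/2)) ^ ((j : ℝ)/2) := by
          apply Real.rpow_le_rpow (by positivity) _ hz
          rw [div_le_iff₀ (by linarith)]
          nlinarith
        have step2 : (α * (1/2)) ^ ((j : ℝ)/2) = α ^ ((j:ℝ)/2) * r ^ j := by
          rw [Real.mul_rpow hα.le (by norm_num), hrdef,
            ← Real.rpow_natCast ((1/2:ℝ) ^ (1/2:ℝ)) j, ← Real.rpow_mul (by norm_num)]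
          ring_nf
        have step3 : α ^ ((j:ℝ)/2) ≤ α := by
          nth_rewrite 2 [← Real.rpow_one α]
          exact Real.rpow_le_rpow_of_exponent_ge hα h1 (by linarith)
        calc (α / j) ^ ((j : ℝ)/2) ≤ α ^ ((j:ℝ)/2) * r ^ j := by rw [← step2]; exact step1
          _ ≤ α * r ^ j := mul_le_mul_of_nonneg_right step3 (pow_nonneg hr0 j)
      · positivity
    have hb : Summable (fun j : ℕ => α * r ^ j) :=
      (summable_geometric_of_lt_one hr0 hr1).mul_left α
    have ha : Summable f := Summable.of_nonneg_of_le fnn key hb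
    calc ∑' j, f j ≤ ∑' j : ℕ, α * r ^ j := Summable.tsum_le_tsum key ha hb
      _ = α * (1 - r)⁻¹ := by rw [tsum_mul_left, tsum_geometric_of_lt_one hr0 hr1]
      _ ≤ α * 8 := by
          apply mul_le_mul_of_nonneg_left _ hα.le
          rw [inv_le_comm₀ (by linarith) (by norm_num)]
          linarith
      _ ≤ Real.exp (8 * α) - 1 := by
          have := Real.add_one_le_exp (8 * α)
          linarith
  · -- large α : AM-GM comparison with ((2α)^j/j! + (1/2)^j)/2
    set b : ℕ → ℝ := fun j => ((2*α) ^ j / (j.factorial : ℝ) + (1/2) ^ j) / 2 with hbdef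
    have key : ∀ j, f j ≤ b j := by
      intro j
      simp only [hf, hbdef]
      split
      · rename_i hj
        have hj2 : (2 : ℝ) ≤ (j : ℝ) := by exact_mod_cast hj
        have hjpos : (0:ℝ) < (j:ℝ) := by linarith
        have hx : (0:ℝ) ≤ α / j := by positivity
        have e1 : (α / j) ^ ((j : ℝ)/2) = Real.sqrt ((α/(j:ℝ)) ^ j) := by
          rw [Real.sqrt_eq_rpow, ← Real.rpow_natCast (α/(j:ℝ)) j,
            ← Real.rpow_mul hx]
          ring_nf
        have hfact : (j.factorial : ℝ) ≤ (j:ℝ) ^ j := by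
          exact_mod_cast Nat.factorial_le_pow j
        have hfpos : (0:ℝ) < (j.factorial : ℝ) := by positivity
        have e2 : (α/(j:ℝ)) ^ j ≤ α ^ j / (j.factorial : ℝ) := by
          rw [div_pow]
          gcongr
        have e3 : α ^ j / (j.factorial : ℝ) = ((2*α) ^ j / (j.factorial : ℝ)) * (1/2) ^ j := by
          field_simp
          rw [← mul_pow]; ring
        calc (α / j) ^ ((j : ℝ)/2) = Real.sqrt ((α/(j:ℝ)) ^ j) := e1
          _ ≤ Real.sqrt (((2*α) ^ j / (j.factorial : ℝ)) * (1/2) ^ j) := by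
              apply Real.sqrt_le_sqrt
              rw [← e3]; exact e2
          _ ≤ ((2*α) ^ j / (j.factorial : ℝ) + (1/2) ^ j) / 2 :=
              amgm_sqrt _ _ (by positivity) (by positivity)
      · positivity
    have hs1 : Summable (fun j : ℕ => (2*α) ^ j / (j.factorial : ℝ)) :=
      Real.summable_pow_div_factorial (2*α)
    have hs2 : Summable (fun j : ℕ => ((1:ℝ)/2) ^ j) :=
      summable_geometric_of_lt_one (by norm_num) (by norm_num)
    have hb : Summable b := ((hs1.add hs2).div_const 2)
    have ha : Summable f := Summable.of_nonneg_of_le fnn key hb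
    have htsumb : ∑' j, b j = (Real.exp (2*α) + 2) / 2 := by
      simp only [hbdef]
      rw [tsum_div_const, Summable.tsum_add hs1 hs2, exp_tsum,
        tsum_geometric_of_lt_one (by norm_num) (by norm_num)]
      norm_num
    have final : (Real.exp (2*α) + 2) / 2 ≤ Real.exp (8 * α) - 1 := by
      have e8 : Real.exp (8 * α) = Real.exp (2*α) * Real.exp (6*α) := by
        rw [← Real.exp_add]; ring_nf
      have h6 : (7:ℝ) ≤ Real.exp (6*α) := by
        have := Real.add_one_le_exp (6*α)
        linarith
      have h2 : (1:ℝ) ≤ Real.exp (2*α) := Real.one_le_exp (by positivity)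
      have hmul : Real.exp (2*α) * 7 ≤ Real.exp (2*α) * Real.exp (6*α) :=
        mul_le_mul_of_nonneg_left h6 (by linarith)
      rw [e8]; linarith
    calc ∑' j, f j ≤ ∑' j, b j := Summable.tsum_le_tsum key ha hb
      _ = (Real.exp (2*α) + 2) / 2 := htsumb
      _ ≤ Real.exp (8 * α) - 1 := final
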